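/- Let D₁, D₂ be complementary diagonal 0–1 projection matrices (D₁ + D₂ = I, D₁D₂ = 0) and C₁, C₂ symmetric positive definite with inverses P₁, P₂. If the covariance C = D₁C₁D₁ + D₂C₂D₂ is invertible, then C⁻¹ = Σ_{i=1,2} ( D_i P_i D_i − D_i P_i [(I − D_i) P_i (I − D_i)]^† P_i D_i ), where † denotes the Moore–Penrose pseudoinverse. -/

import Mathlib

open Matrix

/-- A matrix `Q` is the Moore–Penrose pseudoinverse of `A` if it satisfies the
four Penrose conditions. -/
def IsMoorePenrose {N : ℕ} (A Q : Matrix (Fin N) (Fin N) ℝ) : Prop :=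
  A * Q * A = A ∧ Q * A * Q = Q ∧ (A * Q)ᵀ = A * Q ∧ (Q * A)ᵀ = Q * A

/-- The Moore–Penrose pseudoinverse is unique. -/
lemma mp_unique {N : ℕ} {A Q Q' : Matrix (Fin N) (Fin N) ℝ}
    (h : IsMoorePenrose A Q) (h' : IsMoorePenrose A Q') : Q = Q' := by
  obtain ⟨h1, h2, h3, h4⟩ := h
  obtain ⟨h1', h2', h3', h4'⟩ := h'
  have hAQ : A * Q = A * Q' := by
    calc A * Q = (A * Q' * A) * Q := by rw [h1']
    _ = (A * Q') * (A * Q) := by noncomm_ring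
    _ = (A * Q')ᵀ * (A * Q)ᵀ := by rw [h3', h3]
    _ = ((A * Q) * (A * Q'))ᵀ := (transpose_mul _ _).symm
    _ = ((A * Q * A) * Q')ᵀ := by rw [show (A * Q) * (A * Q') = (A * Q * A) * Q' from by
          noncomm_ring]
    _ = (A * Q')ᵀ := by rw [h1]
    _ = A * Q' := h3'
  have hQA : Q * A = Q' * A := by
    calc Q * A = Q * (A * Q' * A) := by rw [h1']
    _ = (Q * A) * (Q' * A) := by noncomm_ring
    _ = (Q * A)ᵀ * (Q' * A)ᵀ := by rw [h4, h4']
    _ = ((Q' * A) * (Q * A))ᵀ := (transpose_mul _ _).symm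
    _ = (Q' * (A * Q * A))ᵀ := by rw [show (Q' * A) * (Q * A) = Q' * (A * Q * A) from by
          noncomm_ring]
    _ = (Q' * A)ᵀ := by rw [h1]
    _ = Q' * A := h4'
  calc Q = Q * A * Q := h2.symm
  _ = Q * (A * Q') := by rw [mul_assoc, hAQ]
  _ = (Q * A) * Q' := by rw [mul_assoc]
  _ = (Q' * A) * Q' := by rw [hQA]
  _ = Q' := h2'

lemma diag_idem {N : ℕ} {D : Matrix (Fin N) (Fin N) ℝ} (hdiag : D.IsDiag)
    (hzo : ∀ i, D i i = 0 ∨ D i i = 1) : D * D = D := by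
  ext i j
  rw [Matrix.mul_apply]
  by_cases h : i = j
  · subst h
    rw [Finset.sum_eq_single i (fun k _ hk => by
      rw [hdiag (fun hik => hk (hik.symm)), zero_mul]) (by simp)]
    rcases hzo i with h | h <;> rw [h] <;> ring
  · rw [hdiag h]
    apply Finset.sum_eq_zero
    intro k _
    by_cases hk : i = k
    · subst hk; rw [hdiag h, mul_zero]
    · rw [hdiag hk, zero_mul]

lemma diag_transp {N : ℕ} {D : Matrix (Fin N) (Fin N) ℝ} (hdiag : D.IsDiag) : Dᵀ = D := by
  ext i j
  rw [transpose_apply]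
  by_cases h : i = j
  · subst h; rfl
  · rw [hdiag h, hdiag (fun hji => h hji.symm)]

/-- The key computation for one block. -/
lemma key_block {N : ℕ} (D E C P Q : Matrix (Fin N) (Fin N) ℝ)
    (hDE : D + E = 1)
    (hD2 : D * D = D) (hE2 : E * E = E) (hDE0 : D * E = 0) (hED0 : E * D = 0)
    (hEt : Eᵀ = E)
    (hCP : C * P = 1)
    (hPpd : P.PosDef)
    (hQ : IsMoorePenrose (E * P * E) Q) :
    D * C * D * (D * P * D - D * P * Q * P * D) = D := by
  classical
  set M : Matrix (Fin N) (Fin N) ℝ := E * P * E with hM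
  -- positive semidefiniteness of M and D
  have hPsd : P.PosSemidef := hPpd.posSemidef
  have hMsd : M.PosSemidef := by
    have := hPsd.conjTranspose_mul_mul_same E
    rwa [conjTranspose_eq_transpose_of_trivial, hEt] at this
  have hDsd : D.PosSemidef := by
    have h1 : (1 : Matrix (Fin N) (Fin N) ℝ).PosSemidef := Matrix.PosDef.one.posSemidef
    have := h1.mul_mul_conjTranspose_same D
    rwa [mul_one, conjTranspose_eq_transpose_of_trivial,
      show Dᵀ = D from by
        have := hEt
        -- derive Dᵀ = D from D = 1 - E and Eᵀ = E
        rw [show D = 1 - E from eq_sub_of_add_eq hDE, transpose_sub, transpose_one, hEt],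
      hD2] at this
  have hM'sd : (M + D).PosSemidef := hMsd.add hDsd
  -- kernel of M + D is trivial
  have hker : ∀ x : Fin N → ℝ, (M + D) *ᵥ x = 0 → x = 0 := by
    intro x hx
    have h0 : star x ⬝ᵥ ((M + D) *ᵥ x) = 0 := by rw [hx, dotProduct_zero]
    rw [add_mulVec, dotProduct_add] at h0
    have ha : star x ⬝ᵥ (M *ᵥ x) = 0 :=
      le_antisymm (by nlinarith [hMsd.dotProduct_mulVec_nonneg x, hDsd.dotProduct_mulVec_nonneg x]) (hMsd.dotProduct_mulVec_nonneg x)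
    have hb : star x ⬝ᵥ (D *ᵥ x) = 0 :=
      le_antisymm (by nlinarith [hMsd.dotProduct_mulVec_nonneg x, hDsd.dotProduct_mulVec_nonneg x]) (hDsd.dotProduct_mulVec_nonneg x)
    have hDx : D *ᵥ x = 0 := (hDsd.dotProduct_mulVec_zero_iff x).mp hb
    -- from ha deduce E *ᵥ x = 0
    have hEx : E *ᵥ x = 0 := by
      by_contra hne
      have hpos := hPpd.dotProduct_mulVec_pos hne
      have : star x ⬝ᵥ (M *ᵥ x) = star (E *ᵥ x) ⬝ᵥ (P *ᵥ (E *ᵥ x)) := by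
        rw [hM, star_trivial, star_trivial, ← mulVec_mulVec, ← mulVec_mulVec,
          dotProduct_mulVec x E, ← mulVec_transpose, hEt]
      rw [this] at ha
      rw [ha] at hpos
      exact lt_irrefl 0 hpos
    have : x = (D + E) *ᵥ x := by rw [hDE, one_mulVec]
    rw [add_mulVec, hDx, hEx, add_zero] at this
    exact this
  have hM'pd : (M + D).PosDef := by
    refine Matrix.PosDef.of_dotProduct_mulVec_pos hM'sd.1 (fun x hx => ?_)
    rcases lt_or_eq_of_le (hM'sd.dotProduct_mulVec_nonneg x) with h | h
    · exact h
    · exact absurd (hker x ((hM'sd.dotProduct_mulVec_zero_iff x).mp h.symm)) hx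
  have hdet : IsUnit (M + D).det := isUnit_iff_ne_zero.mpr hM'pd.det_pos.ne'
  set R : Matrix (Fin N) (Fin N) ℝ := (M + D)⁻¹ with hR
  have hM'R : (M + D) * R = 1 := mul_nonsing_inv _ hdet
  have hRM' : R * (M + D) = 1 := nonsing_inv_mul _ hdet
  -- basic identities
  have hMD : M * D = 0 := by rw [hM, mul_assoc, hED0, mul_zero]
  have hDM : D * M = 0 := by rw [hM, ← mul_assoc, ← mul_assoc, hDE0, zero_mul, zero_mul]
  have hM'D : (M + D) * D = D := by rw [add_mul, hMD, hD2, zero_add]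
  have hDM' : D * (M + D) = D := by rw [mul_add, hDM, hD2, zero_add]
  have hRD : R * D = D := by
    calc R * D = R * ((M + D) * D) := by rw [hM'D]
    _ = (R * (M + D)) * D := by rw [mul_assoc]
    _ = D := by rw [hRM', one_mul]
  have hMR : M * R = 1 - D := by
    have : M = (M + D) - D := by abel
    rw [this, sub_mul, hM'R]
    congr 1
    calc D * R = (D * (M + D)) * R := by rw [hDM']
    _ = D * ((M + D) * R) := by rw [mul_assoc]
    _ = D := by rw [hM'R, mul_one]
  have hRM : R * M = 1 - D := by
    have : M = (M + D) - D := by abel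
    rw [this, mul_sub, hRM', hRD]
  have hE1D : E = 1 - D := eq_sub_of_add_eq' hDE
  have hMRE : M * R = E := by rw [hMR, ← hE1D]
  have hRME : R * M = E := by rw [hRM, ← hE1D]
  have hEM : E * M = M := by
    calc E * M = (E * E) * P * E := by rw [hM]; noncomm_ring
    _ = M := by rw [hE2, hM]
  have hME : M * E = M := by
    calc M * E = (E * P) * (E * E) := by rw [hM]; noncomm_ring
    _ = M := by rw [hE2, hM, mul_assoc]
  have hMER : M * (E * R) = E := by rw [← mul_assoc, hME, hMRE]
  have hERM : (E * R) * M = E := by rw [mul_assoc, hRME, hE2]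
  -- E * R is a Moore-Penrose pseudoinverse of M
  have hQ' : IsMoorePenrose M (E * R) := by
    refine ⟨?_, ?_, ?_, ?_⟩
    · rw [hMER, hEM]
    · rw [hERM, ← mul_assoc, hE2]
    · rw [hMER, hEt]
    · rw [hERM, hEt]
  have hQER : Q = E * R := mp_unique hQ hQ'
  -- derived identities used in the final computation
  have hDQ : D * Q = 0 := by rw [hQER, ← mul_assoc, hDE0, zero_mul]
  have hEPQ : E * P * Q = E := by
    rw [hQER, ← mul_assoc]
    exact hMRE
  have hCPD : D * C * D * P = D - D * C * (E * P) := by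
    have h0 : D * C * D * P + D * C * (E * P) = D := by
      calc D * C * D * P + D * C * (E * P) = D * (C * ((D + E) * P)) := by noncomm_ring
      _ = D * (C * P) := by rw [hDE, one_mul]
      _ = D := by rw [hCP, mul_one]
    exact eq_sub_of_add_eq h0
  calc D * C * D * (D * P * D - D * P * Q * P * D)
      = (D * C * ((D * D) * P)) * D - (D * C * ((D * D) * P)) * (Q * (P * D)) := by
        noncomm_ring
  _ = (D * C * D * P) * D - (D * C * D * P) * (Q * (P * D)) := by
        rw [hD2]; noncomm_ring
  _ = (D - D * C * (E * P)) * D - (D - D * C * (E * P)) * (Q * (P * D)) := by rw [hCPD]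
  _ = D * D - D * C * ((E * P) * D) - ((D * Q) * (P * D) - D * C * ((E * P * Q) * (P * D))) := by
        noncomm_ring
  _ = D - D * C * ((E * P) * D) - ((0 : Matrix (Fin N) (Fin N) ℝ) * (P * D)
        - D * C * (E * (P * D))) := by rw [hD2, hDQ, hEPQ]
  _ = D := by noncomm_ring

lemma cross_block {N : ℕ} (D E Cm P Q : Matrix (Fin N) (Fin N) ℝ) (h : E * D = 0) :
    E * Cm * E * (D * P * D - D * P * Q * P * D) = 0 := by
  calc E * Cm * E * (D * P * D - D * P * Q * P * D)
      = (E * Cm) * ((E * D) * (P * D)) - (E * Cm) * ((E * D) * ((P * Q) * (P * D))) := by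
        noncomm_ring
  _ = 0 := by rw [h]; simp

/-- For complementary diagonal 0–1 projections D₁, D₂
(D₁ + D₂ = I, D₁D₂ = 0) and symmetric positive definite C₁, C₂ with inverses
P₁, P₂, if C = D₁C₁D₁ + D₂C₂D₂ is invertible then
C⁻¹ = Σᵢ ( DᵢPᵢDᵢ − DᵢPᵢ[(I−Dᵢ)Pᵢ(I−Dᵢ)]†PᵢDᵢ ),
where † is the Moore–Penrose pseudoinverse. -/
theorem regional_precision_formula
    (N : ℕ) (D1 D2 C1 C2 P1 P2 Q1 Q2 : Matrix (Fin N) (Fin N) ℝ)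
    (hD1diag : D1.IsDiag) (hD2diag : D2.IsDiag)
    (hD1zeroone : ∀ i, D1 i i = 0 ∨ D1 i i = 1)
    (hD2zeroone : ∀ i, D2 i i = 0 ∨ D2 i i = 1)
    (hsum : D1 + D2 = 1) (hprod : D1 * D2 = 0)
    (hD1ne : D1 ≠ 0) (hD2ne : D2 ≠ 0)
    (hC1 : C1.PosDef) (hC1sym : C1.IsSymm)
    (hC2 : C2.PosDef) (hC2sym : C2.IsSymm)
    (hP1 : P1 = C1⁻¹) (hP2 : P2 = C2⁻¹)
    (hQ1 : IsMoorePenrose ((1 - D1) * P1 * (1 - D1)) Q1)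
    (hQ2 : IsMoorePenrose ((1 - D2) * P2 * (1 - D2)) Q2)
    (hC : IsUnit (D1 * C1 * D1 + D2 * C2 * D2).det) :
    (D1 * C1 * D1 + D2 * C2 * D2)⁻¹
      = (D1 * P1 * D1 - D1 * P1 * Q1 * P1 * D1)
        + (D2 * P2 * D2 - D2 * P2 * Q2 * P2 * D2) := by
  have hD1sq : D1 * D1 = D1 := diag_idem hD1diag hD1zeroone
  have hD2sq : D2 * D2 = D2 := diag_idem hD2diag hD2zeroone
  have hD1t : D1ᵀ = D1 := diag_transp hD1diag
  have hD2t : D2ᵀ = D2 := diag_transp hD2diag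
  have h1D1 : (1 : Matrix (Fin N) (Fin N) ℝ) - D1 = D2 := (eq_sub_of_add_eq' hsum).symm
  have h1D2 : (1 : Matrix (Fin N) (Fin N) ℝ) - D2 = D1 := (eq_sub_of_add_eq hsum).symm
  rw [h1D1] at hQ1
  rw [h1D2] at hQ2
  have hprod21 : D2 * D1 = 0 := by
    rw [← h1D1, sub_mul, one_mul, hD1sq, sub_self]
  have hC1det : IsUnit C1.det := isUnit_iff_ne_zero.mpr hC1.det_pos.ne'
  have hC2det : IsUnit C2.det := isUnit_iff_ne_zero.mpr hC2.det_pos.ne'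
  have hC1P1 : C1 * P1 = 1 := by rw [hP1]; exact mul_nonsing_inv _ hC1det
  have hC2P2 : C2 * P2 = 1 := by rw [hP2]; exact mul_nonsing_inv _ hC2det
  have hP1pd : P1.PosDef := by rw [hP1]; exact hC1.inv
  have hP2pd : P2.PosDef := by rw [hP2]; exact hC2.inv
  have k1 : D1 * C1 * D1 * (D1 * P1 * D1 - D1 * P1 * Q1 * P1 * D1) = D1 :=
    key_block D1 D2 C1 P1 Q1 hsum hD1sq hD2sq hprod hprod21 hD2t hC1P1 hP1pd hQ1
  have k2 : D2 * C2 * D2 * (D2 * P2 * D2 - D2 * P2 * Q2 * P2 * D2) = D2 :=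
    key_block D2 D1 C2 P2 Q2 (by rw [add_comm]; exact hsum) hD2sq hD1sq hprod21 hprod
      hD1t hC2P2 hP2pd hQ2
  have c12 : D1 * C1 * D1 * (D2 * P2 * D2 - D2 * P2 * Q2 * P2 * D2) = 0 :=
    cross_block D2 D1 C1 P2 Q2 hprod
  have c21 : D2 * C2 * D2 * (D1 * P1 * D1 - D1 * P1 * Q1 * P1 * D1) = 0 :=
    cross_block D1 D2 C2 P1 Q1 hprod21
  apply Matrix.inv_eq_right_inv
  calc (D1 * C1 * D1 + D2 * C2 * D2)
        * ((D1 * P1 * D1 - D1 * P1 * Q1 * P1 * D1) + (D2 * P2 * D2 - D2 * P2 * Q2 * P2 * D2))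
      = D1 * C1 * D1 * (D1 * P1 * D1 - D1 * P1 * Q1 * P1 * D1)
        + D1 * C1 * D1 * (D2 * P2 * D2 - D2 * P2 * Q2 * P2 * D2)
        + D2 * C2 * D2 * (D1 * P1 * D1 - D1 * P1 * Q1 * P1 * D1)
        + D2 * C2 * D2 * (D2 * P2 * D2 - D2 * P2 * Q2 * P2 * D2) := by noncomm_ring
  _ = D1 + 0 + 0 + D2 := by rw [k1, k2, c12, c21]
  _ = 1 := by rw [add_zero, add_zero]; exact hsum
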